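/- Given c ≥ 2 distinct negative unsafe-event impacts ξ⁻₁ > ξ⁻₂ > … > ξ⁻_c, any achievable pSS value Ψ can be formed by at least c distinct event combinations, one using each impact ξ⁻_k, so an adversary observing only Ψ cannot determine which unsafe event type occurred. -/
import Mathlib


/-- Given `c ≥ 2` distinct negative unsafe-event impacts
`ξ⁻₁ > ξ⁻₂ > … > ξ⁻_c`, any achievable pSS value `Ψ` can be formed by at least
`c` distinct event combinations, one using each impact `ξ⁻_k`: for every `k`
there exist nonnegative integers `x, y, r` with
`Ψ = ⌊x·ξ⁻_k + y·ξ⁺·r_d^⌊r/Δ_d⌋⌋`. Hence an adversary observing only `Ψ`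
cannot determine which unsafe event type occurred. -/
theorem pSS_formed_by_every_unsafe_impact
    (c : ℕ) (hc : 2 ≤ c) (ξm : Fin c → ℤ)
    (hneg : ∀ k, ξm k < 0)
    (hdec : ∀ i j : Fin c, i < j → ξm j < ξm i)
    (ξp : ℤ) (hξp : 0 < ξp)
    (r_d : ℝ) (hr₀ : 0 < r_d) (hr₁ : r_d < 1)
    (Δd : ℕ) (hΔ : 1 ≤ Δd)
    (Ψ : ℤ)
    (hach : ∀ k : Fin c, ∃ x : ℕ, 0 ≤ Ψ - (x : ℤ) * ξm k) :
    ∀ k : Fin c, ∃ x y r : ℕ,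
      Ψ = ⌊(x : ℝ) * (ξm k : ℝ) + (y : ℝ) * (ξp : ℝ) * r_d ^ (r / Δd)⌋ := by
  intro k
  obtain ⟨x, hx⟩ := hach k
  set N : ℤ := Ψ - (x : ℤ) * ξm k with hNdef
  -- choose n with r_d ^ n < 1/ξp
  obtain ⟨n, hn⟩ := exists_pow_lt_of_lt_one (by positivity : (0:ℝ) < 1 / (ξp:ℝ)) hr₁
  set s : ℝ := (ξp : ℝ) * r_d ^ n with hsdef
  have hξpR : (0:ℝ) < (ξp:ℝ) := by exact_mod_cast hξp
  have hs0 : 0 < s := by positivity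
  have hs1 : s < 1 := by
    calc s = (ξp:ℝ) * r_d ^ n := rfl
      _ < (ξp:ℝ) * (1 / (ξp:ℝ)) := by
          exact mul_lt_mul_of_pos_left hn hξpR
      _ = 1 := by field_simp
  refine ⟨x, (⌈(N : ℝ) / s⌉).toNat, n * Δd, ?_⟩
  have hdiv : n * Δd / Δd = n := Nat.mul_div_cancel n (by omega)
  rw [hdiv]
  have hN0 : (0:ℝ) ≤ (N:ℝ) := by exact_mod_cast hx
  have hq0 : (0:ℝ) ≤ (N:ℝ) / s := div_nonneg hN0 hs0.le
  have hy : ((⌈(N : ℝ) / s⌉).toNat : ℝ) = (⌈(N : ℝ) / s⌉ : ℝ) := by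
    norm_cast
    exact Int.toNat_of_nonneg (Int.ceil_nonneg hq0)
  symm
  rw [Int.floor_eq_iff]
  constructor
  · -- lower bound: Ψ ≤ x·ξm + y·s
    have h1 : (N:ℝ) ≤ ((⌈(N : ℝ) / s⌉).toNat : ℝ) * s := by
      rw [hy]
      have := Int.le_ceil ((N:ℝ) / s)
      calc (N:ℝ) = (N:ℝ) / s * s := by field_simp
        _ ≤ (⌈(N : ℝ) / s⌉ : ℝ) * s := by
            exact mul_le_mul_of_nonneg_right this hs0.le
    have : (Ψ:ℝ) = (x:ℝ) * (ξm k : ℝ) + (N:ℝ) := by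
      push_cast [hNdef]; ring
    rw [this, hsdef] at *
    nlinarith [h1]
  · -- upper bound
    have h2 : ((⌈(N : ℝ) / s⌉).toNat : ℝ) * s < (N:ℝ) + 1 := by
      rw [hy]
      have hc1 : (⌈(N : ℝ) / s⌉ : ℝ) < (N:ℝ) / s + 1 := Int.ceil_lt_add_one _
      have : (⌈(N : ℝ) / s⌉ : ℝ) * s < ((N:ℝ) / s + 1) * s :=
        mul_lt_mul_of_pos_right hc1 hs0
      calc (⌈(N : ℝ) / s⌉ : ℝ) * s < ((N:ℝ) / s + 1) * s := this
        _ = (N:ℝ) + s := by field_simp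
        _ < (N:ℝ) + 1 := by linarith
    have hΨ : (Ψ:ℝ) = (x:ℝ) * (ξm k : ℝ) + (N:ℝ) := by
      push_cast [hNdef]; ring
    rw [hΨ, hsdef] at *
    push_cast
    nlinarith [h2]
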